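/- arXiv:1804.08941 — 8 statements merged into one kernel-verified Lean document; each statement's English description precedes it below -/
import Mathlib

section
/- Let s, q ∈ ℂ[X] be coprime polynomials with q ≠ 0 and such that s and q are not both constant. For λ ∈ ℂ let N(λ) denote the number of roots of the polynomial λ·q − s lying in the open unit disc 𝔻 = {z ∈ ℂ : |z| < 1}, counted with multiplicity. Then the set U = {λ ∈ ℂ : λ·q(z) ≠ s(z) for every z ∈ ℂ with |z| = 1} is open in ℂ, for every λ ∈ U the polynomial λ·q − s is nonzero, and the function λ ↦ N(λ) is locally constant on U. -/
open Polynomial Filter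

section AuxLemmas
open Metric Real Complex


/-- Logarithmic derivative of a split polynomial is the sum of `(z - r)⁻¹`. -/
lemma my_logDeriv_sum (t : Multiset ℂ) (c : ℂ) (z : ℂ)
    (h : Polynomial.eval z (Polynomial.C c * (t.map (fun r => Polynomial.X - Polynomial.C r)).prod) ≠ 0) :
    Polynomial.eval z (Polynomial.derivative (Polynomial.C c * (t.map (fun r => Polynomial.X - Polynomial.C r)).prod)) /
      Polynomial.eval z (Polynomial.C c * (t.map (fun r => Polynomial.X - Polynomial.C r)).prod)
      = (t.map (fun r => (z - r)⁻¹)).sum := by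
  induction t using Multiset.induction_on with
  | empty => simp
  | cons r t ih =>
    have hrw : Polynomial.C c * ((( r ::ₘ t).map (fun r => Polynomial.X - Polynomial.C r)).prod)
        = (Polynomial.X - Polynomial.C r) * (Polynomial.C c * ((t.map (fun r => Polynomial.X - Polynomial.C r)).prod)) := by
      rw [Multiset.map_cons, Multiset.prod_cons]; ring
    rw [hrw] at h ⊢
    set g := Polynomial.C c * ((t.map (fun r => Polynomial.X - Polynomial.C r)).prod) with hg
    have hz : (z - r) ≠ 0 := by
      intro h0
      apply h; simp [h0]
    have hgz : Polynomial.eval z g ≠ 0 := by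
      intro h0; apply h; simp [h0]
    rw [Polynomial.derivative_mul]
    simp only [Polynomial.derivative_sub, Polynomial.derivative_X, Polynomial.derivative_C,
      sub_zero, one_mul, Polynomial.eval_add, Polynomial.eval_mul, Polynomial.eval_sub,
      Polynomial.eval_X, Polynomial.eval_C, Multiset.map_cons, Multiset.sum_cons]
    rw [← ih hgz]
    field_simp



lemma my_ci {r : ℂ} (hr : ‖r‖ ≠ 1) :
    CircleIntegrable (fun z => (z - r)⁻¹) 0 1 := by
  rw [circleIntegrable_sub_inv_iff]
  right
  simp [mem_sphere_zero_iff_norm, hr]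

lemma my_val {r : ℂ} (hr : ‖r‖ ≠ 1) :
    (∮ z in C(0, 1), (z - r)⁻¹) = if ‖r‖ < 1 then 2 * π * Complex.I else 0 := by
  split_ifs with h
  · exact circleIntegral.integral_sub_inv_of_mem_ball (by simpa [Complex.dist_eq] using h)
  · have hr1 : 1 < ‖r‖ := lt_of_le_of_ne (not_lt.mp h) (Ne.symm hr)
    apply Complex.circleIntegral_eq_zero_of_differentiable_on_off_countable zero_le_one
      Set.countable_empty
    · intro z hz
      have : z ≠ r := by
        intro h0; subst h0
        simp only [mem_closedBall, Complex.dist_eq, sub_zero] at hz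
        exact absurd (lt_of_lt_of_le hr1 hz) (lt_irrefl _)
      exact ((continuousOn_id.sub continuousOn_const).inv₀
        (fun w hw => sub_ne_zero.2 (by
          intro h0; subst h0
          simp only [mem_closedBall, Complex.dist_eq, sub_zero] at hw
          exact absurd (lt_of_lt_of_le hr1 hw) (lt_irrefl _)))) z hz
    · intro z hz
      have : z ≠ r := by
        intro h0; subst h0
        simp only [Set.mem_diff, mem_ball, Complex.dist_eq, sub_zero] at hz
        exact absurd (hr1.trans hz.1) (lt_irrefl _)
      exact (differentiableAt_id.sub (differentiableAt_const r)).inv (sub_ne_zero.2 this)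

lemma my_ci_sum (t : Multiset ℂ) (ht : ∀ r ∈ t, ‖r‖ ≠ 1) :
    CircleIntegrable (fun z => (t.map (fun r => (z - r)⁻¹)).sum) 0 1 := by
  induction t using Multiset.induction_on with
  | empty => simpa using circleIntegrable_const (0 : ℂ) 0 1
  | cons r t ih =>
    have h1 : CircleIntegrable (fun z => (z - r)⁻¹) 0 1 := my_ci (ht r (Multiset.mem_cons_self r t))
    have h2 := ih (fun x hx => ht x (Multiset.mem_cons_of_mem hx))
    have := h1.add h2
    simp only [Multiset.map_cons, Multiset.sum_cons]
    exact this

lemma my_integral_sum (t : Multiset ℂ) (ht : ∀ r ∈ t, ‖r‖ ≠ 1) :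
    (∮ z in C(0, 1), (t.map (fun r => (z - r)⁻¹)).sum)
      = (t.map (fun r => ∮ z in C(0, 1), (z - r)⁻¹)).sum := by
  induction t using Multiset.induction_on with
  | empty => simp [circleIntegral]
  | cons r t ih =>
    have h1 : CircleIntegrable (fun z => (z - r)⁻¹) 0 1 := my_ci (ht r (Multiset.mem_cons_self r t))
    have h2 := my_ci_sum t (fun x hx => ht x (Multiset.mem_cons_of_mem hx))
    simp only [Multiset.map_cons, Multiset.sum_cons]
    rw [← ih (fun x hx => ht x (Multiset.mem_cons_of_mem hx))]
    simp only [circleIntegral]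
    rw [← intervalIntegral.integral_add h1.out h2.out]
    congr 1
    funext θ
    simp [smul_add, mul_add]



open scoped Classical in
lemma my_sum_if (t : Multiset ℂ) (c : ℂ) :
    (t.map (fun r => if ‖r‖ < 1 then c else 0)).sum
      = c * (Multiset.card (t.filter (fun z => ‖z‖ < 1))) := by
  induction t using Multiset.induction_on with
  | empty => simp
  | cons r t ih =>
    rw [Multiset.map_cons, Multiset.sum_cons, Multiset.filter_cons, ih]
    split_ifs with h
    · push_cast; ring_nf; simp [mul_add, add_comm]
    · simp

open scoped Classical in
/-- Argument principle for polynomials on the unit circle. -/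
lemma my_arg_principle (p : Polynomial ℂ)
    (hsp : ∀ z : ℂ, ‖z‖ = 1 → p.eval z ≠ 0) :
    (∮ z in C(0, 1), Polynomial.eval z (Polynomial.derivative p) / Polynomial.eval z p)
      = 2 * π * Complex.I *
        (Multiset.card (p.roots.filter (fun z => ‖z‖ < 1))) := by
  have hcard : Multiset.card p.roots = p.natDegree :=
    Polynomial.splits_iff_card_roots.mp (IsAlgClosed.splits p)
  have hsplit := Polynomial.C_leadingCoeff_mul_prod_multiset_X_sub_C hcard
  have hroots : ∀ r ∈ p.roots, ‖r‖ ≠ 1 := by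
    intro r hr h1
    exact hsp r h1 (Polynomial.isRoot_of_mem_roots hr)
  have h1 : (∮ z in C(0, 1), Polynomial.eval z (Polynomial.derivative p) / Polynomial.eval z p)
      = ∮ z in C(0, 1), (p.roots.map (fun r => (z - r)⁻¹)).sum := by
    apply circleIntegral.integral_congr zero_le_one
    intro z hz
    have hz1 : ‖z‖ = 1 := by
      simpa using mem_sphere_zero_iff_norm.mp hz
    have hne : Polynomial.eval z p ≠ 0 := hsp z hz1
    have := my_logDeriv_sum p.roots p.leadingCoeff z (by rw [hsplit]; exact hne)
    rw [hsplit] at this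
    exact this
  rw [h1, my_integral_sum p.roots hroots]
  have h2 : (p.roots.map (fun r => ∮ z in C(0, 1), (z - r)⁻¹)).sum
      = (p.roots.map (fun r => if ‖r‖ < 1 then 2 * π * Complex.I else 0)).sum := by
    apply congrArg
    apply Multiset.map_congr rfl
    intro r hr
    exact my_val (hroots r hr)
  rw [h2, my_sum_if]
end AuxLemmas


section Main
open Metric Real Complex MeasureTheory

open scoped Classical in
/-- For coprime `s, q ∈ ℂ[X]` with `q ≠ 0`, not both constant, the set `U` of `λ`
such that `λ·q − s` has no root on the unit circle is open, `λ·q − s ≠ 0` on `U`,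
and the number of roots of `λ·q − s` in the open unit disc (with multiplicity)
is locally constant on `U`. -/
theorem stmt0 (s q : Polynomial ℂ) (hco : IsCoprime s q) (hq : q ≠ 0)
    (hnc : ¬ (s.natDegree = 0 ∧ q.natDegree = 0))
    (N : ℂ → ℕ)
    (hN : ∀ l : ℂ, N l =
      Multiset.card (((Polynomial.C l * q - s).roots).filter (fun z => ‖z‖ < 1)))
    (U : Set ℂ)
    (hU : U = {l : ℂ | ∀ z : ℂ, ‖z‖ = 1 → l * q.eval z ≠ s.eval z}) :
    IsOpen U ∧ (∀ l ∈ U, Polynomial.C l * q - s ≠ 0) ∧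
      (∀ l ∈ U, ∀ᶠ μ in nhds l, N μ = N l) := by
  subst hU
  set Uset := {l : ℂ | ∀ z : ℂ, ‖z‖ = 1 → l * q.eval z ≠ s.eval z} with hUdef
  -- Part 1: openness
  have hopen : IsOpen Uset := by
    rw [← isClosed_compl_iff]
    have himg : Usetᶜ = Prod.fst ''
        {p : ℂ × (Metric.sphere (0:ℂ) 1) | p.1 * q.eval (p.2 : ℂ) = s.eval (p.2 : ℂ)} := by
      ext l
      simp only [Set.mem_compl_iff, hUdef, Set.mem_setOf_eq, not_forall, Set.mem_image,
        Prod.exists]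
      constructor
      · rintro ⟨z, hz1, hz2⟩
        have hz1' : ‖z‖ = 1 := hz1
        have hzs : z ∈ Metric.sphere (0:ℂ) 1 := by
          simpa [mem_sphere_zero_iff_norm] using hz1'
        exact ⟨l, ⟨z, hzs⟩, (not_not.mp hz2 : _), rfl⟩
      · rintro ⟨a, z, hz, rfl⟩
        refine ⟨(z : ℂ), ?_, by simpa using hz⟩
        simpa [mem_sphere_zero_iff_norm] using z.2
    rw [himg]
    apply isClosedMap_fst_of_compactSpace
    apply isClosed_eq
    · exact continuous_fst.mul ((q.continuous).comp (continuous_subtype_val.comp continuous_snd))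
    · exact (s.continuous).comp (continuous_subtype_val.comp continuous_snd)
  -- Part 2: nonvanishing
  have hne : ∀ l ∈ Uset, Polynomial.C l * q - s ≠ 0 := by
    intro l hl h0
    have h1 := hl 1 (by simp)
    apply h1
    have := congrArg (Polynomial.eval 1) h0
    simp only [Polynomial.eval_sub, Polynomial.eval_mul, Polynomial.eval_C,
      Polynomial.eval_zero, sub_eq_zero] at this
    exact this
  refine ⟨hopen, hne, ?_⟩
  -- Part 3: local constancy
  intro l hl
  obtain ⟨δ, hδpos, hδ⟩ : ∃ δ > 0, Metric.closedBall l δ ⊆ Uset := by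
    rcases Metric.isOpen_iff.mp hopen l hl with ⟨ε, hε, hsub⟩
    exact ⟨ε/2, by linarith, fun x hx =>
      hsub (lt_of_le_of_lt (mem_closedBall.mp hx) (by linarith))⟩
  set G : ℂ × ℂ → ℂ := fun p =>
    (p.1 * (Polynomial.derivative q).eval p.2 - (Polynomial.derivative s).eval p.2)
      / (p.1 * q.eval p.2 - s.eval p.2) with hG
  have hGnum : Continuous (fun p : ℂ × ℂ =>
      p.1 * (Polynomial.derivative q).eval p.2 - (Polynomial.derivative s).eval p.2) :=
    (continuous_fst.mul ((Polynomial.derivative q).continuous.comp continuous_snd)).sub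
      ((Polynomial.derivative s).continuous.comp continuous_snd)
  have hGden : Continuous (fun p : ℂ × ℂ => p.1 * q.eval p.2 - s.eval p.2) :=
    (continuous_fst.mul (q.continuous.comp continuous_snd)).sub
      (s.continuous.comp continuous_snd)
  set K : Set (ℂ × ℂ) := Metric.closedBall l δ ×ˢ Metric.sphere (0:ℂ) 1 with hK
  have hKden : ∀ p ∈ K, p.1 * q.eval p.2 - s.eval p.2 ≠ 0 := by
    rintro ⟨μ, z⟩ ⟨h1, h2⟩
    have hz : ‖z‖ = 1 := by
      simpa [mem_sphere_zero_iff_norm] using h2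
    have := hδ h1 z hz
    exact sub_ne_zero.2 this
  have hGK : ContinuousOn (fun p => ‖(G p)‖) K := by
    apply Continuous.comp_continuousOn continuous_norm
    exact ContinuousOn.div hGnum.continuousOn hGden.continuousOn hKden
  have hKc : IsCompact K := (isCompact_closedBall l δ).prod (isCompact_sphere 0 1)
  have hKne : K.Nonempty := ⟨(l, 1), by
    constructor
    · exact Metric.mem_closedBall_self hδpos.le
    · simp [mem_sphere_zero_iff_norm]⟩
  obtain ⟨p₀, hp₀K, hp₀'⟩ := hKc.exists_isMaxOn hKne hGK
  have hp₀ : ∀ p ∈ K, ‖(G p)‖ ≤ ‖(G p₀)‖ := hp₀'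
  set M : ℝ := ‖(G p₀)‖ with hM
  -- the parametrized integral
  set Fi : ℂ → ℝ → ℂ := fun μ θ =>
    deriv (circleMap 0 1) θ • G (μ, circleMap 0 1 θ) with hFi
  have hball : Metric.closedBall l δ ∈ nhds l := Metric.closedBall_mem_nhds l hδpos
  have hcontF : ContinuousAt (fun μ => ∫ θ in (0:ℝ)..(2*π), Fi μ θ) l := by
    apply intervalIntegral.continuousAt_of_dominated_interval
      (bound := fun _ => M)
    · filter_upwards [hball] with μ hμ
      apply Continuous.aestronglyMeasurable
      have hden : ∀ θ : ℝ, (μ * q.eval (circleMap 0 1 θ) - s.eval (circleMap 0 1 θ)) ≠ 0 := by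
        intro θ
        exact hKden (μ, circleMap 0 1 θ) ⟨hμ, circleMap_mem_sphere (0:ℂ) zero_le_one θ⟩
      have h1 : Continuous (fun θ : ℝ => deriv (circleMap 0 1) θ) := by
        simp only [deriv_circleMap]
        exact (continuous_circleMap 0 1).mul continuous_const
      exact h1.smul ((hGnum.comp (Continuous.prodMk_right μ |>.comp (continuous_circleMap 0 1))).div
        ((hGden.comp (Continuous.prodMk_right μ |>.comp (continuous_circleMap 0 1)))) hden)
    · filter_upwards [hball] with μ hμ
      apply MeasureTheory.ae_of_all
      intro θ _
      have hmem : (μ, circleMap 0 1 θ) ∈ K := ⟨hμ, circleMap_mem_sphere (0:ℂ) zero_le_one θ⟩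
      have : ‖Fi μ θ‖ = ‖(G (μ, circleMap 0 1 θ))‖ := by
        simp only [hFi, norm_smul, deriv_circleMap, norm_mul,
          Complex.norm_I, mul_one, norm_circleMap_zero, abs_one, one_mul]
      rw [this]
      exact hp₀ _ hmem
    · exact intervalIntegrable_const
    · apply MeasureTheory.ae_of_all
      intro θ _
      show ContinuousAt (fun μ => deriv (circleMap 0 1) θ • G (μ, circleMap 0 1 θ)) l
      apply ContinuousAt.fun_smul continuousAt_const
      have hz := circleMap_mem_sphere (0:ℂ) zero_le_one θ
      have hden : l * q.eval (circleMap 0 1 θ) - s.eval (circleMap 0 1 θ) ≠ 0 :=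
        hKden (l, circleMap 0 1 θ) ⟨Metric.mem_closedBall_self hδpos.le, hz⟩
      have hmk : Continuous (fun μ : ℂ => (μ, circleMap 0 1 θ)) :=
        continuous_id.prodMk continuous_const
      exact ContinuousAt.div (hGnum.comp hmk).continuousAt (hGden.comp hmk).continuousAt hden
  have key : ∀ μ ∈ Uset, (∫ θ in (0:ℝ)..(2*π), Fi μ θ)
      = 2 * π * Complex.I * (N μ : ℂ) := by
    intro μ hμ
    have hsp : ∀ z : ℂ, ‖z‖ = 1 → (Polynomial.C μ * q - s).eval z ≠ 0 := by
      intro z hz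
      have h1 : (Polynomial.C μ * q - s).eval z = μ * q.eval z - s.eval z := by simp
      rw [h1]; exact sub_ne_zero.2 (hμ z hz)
    have harg := my_arg_principle (Polynomial.C μ * q - s) hsp
    have hFeq : (∫ θ in (0:ℝ)..(2*π), Fi μ θ)
        = ∮ z in C(0,1), Polynomial.eval z (Polynomial.derivative (Polynomial.C μ * q - s))
            / Polynomial.eval z (Polynomial.C μ * q - s) := by
      simp only [circleIntegral]
      apply intervalIntegral.integral_congr
      intro θ _
      simp only [hFi, hG]
      congr 1
      simp [Polynomial.derivative_sub, Polynomial.derivative_C_mul]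
    rw [hFeq, harg, hN μ]
  have hev1 : ∀ᶠ μ in nhds l, μ ∈ Uset := hopen.mem_nhds hl
  have hev2 : ∀ᶠ μ in nhds l,
      dist (∫ θ in (0:ℝ)..(2*π), Fi μ θ) (∫ θ in (0:ℝ)..(2*π), Fi l θ) < 2*π :=
    (Metric.tendsto_nhds.mp hcontF) (2*π) (by positivity)
  filter_upwards [hev1, hev2] with μ hμU hμd
  rw [key μ hμU, key l hl] at hμd
  by_contra hcon
  have hz : ((N μ : ℤ) ≠ (N l : ℤ)) := by exact_mod_cast hcon
  have h1 : (1:ℝ) ≤ |(N μ : ℝ) - (N l : ℝ)| := by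
    have h2 := Int.one_le_abs (sub_ne_zero.2 hz)
    have : ((1:ℤ):ℝ) ≤ ((|(N μ : ℤ) - (N l : ℤ)| : ℤ) : ℝ) := by exact_mod_cast h2
    push_cast at this
    convert this using 2 <;> push_cast <;> ring
  have h2 : dist (2 * ↑π * Complex.I * (N μ : ℂ)) (2 * ↑π * Complex.I * (N l : ℂ))
      = 2 * π * |(N μ : ℝ) - (N l : ℝ)| := by
    rw [Complex.dist_eq]
    have h3 : (2 * ↑π * Complex.I * (N μ : ℂ)) - (2 * ↑π * Complex.I * (N l : ℂ))
        = (2 * ↑π * Complex.I) * ((((N μ : ℝ) - (N l : ℝ)) : ℝ) : ℂ) := by push_cast; ring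
    rw [h3]
    simp only [norm_mul, Complex.norm_two, Complex.norm_I, Complex.norm_real, Real.norm_eq_abs, mul_one]
    rw [abs_of_pos Real.pi_pos]
  rw [h2] at hμd
  nlinarith [Real.pi_pos]
end Main
end

section
/- Let α ∈ ℂ with α ≠ 1, and write a = Re α, b = Im α. Then {(z − α)/(z − 1) : z ∈ ℂ, |z| = 1, z ≠ 1} = {x + iy : x, y ∈ ℝ, 2by = (a² + b² − 1) + (2 − 2a)x}. -/
/-- Key: the line condition is equivalent to equidistance from `α` and `1`. -/
lemma key_line (α w : ℂ) :
    ‖w - α‖ = ‖w - 1‖ ↔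
      2 * α.im * w.im = (α.re ^ 2 + α.im ^ 2 - 1) + (2 - 2 * α.re) * w.re := by
  rw [Complex.norm_def, Complex.norm_def,
    Real.sqrt_inj (Complex.normSq_nonneg _) (Complex.normSq_nonneg _)]
  simp only [Complex.normSq_apply, Complex.sub_re, Complex.sub_im, Complex.one_re,
    Complex.one_im]
  constructor <;> intro h <;> nlinarith [h]

/-- The image of the punctured unit circle under `z ↦ (z − α)/(z − 1)`, `α ≠ 1`,
is the line `2by = (a² + b² − 1) + (2 − 2a)x` where `a = Re α`, `b = Im α`. -/
theorem stmt3 (α : ℂ) (hα : α ≠ 1) :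
    {w : ℂ | ∃ z : ℂ, ‖z‖ = 1 ∧ z ≠ 1 ∧ w = (z - α) / (z - 1)} =
      {w : ℂ | 2 * α.im * w.im = (α.re ^ 2 + α.im ^ 2 - 1) + (2 - 2 * α.re) * w.re} := by
  have hα' : (1 : ℂ) - α ≠ 0 := sub_ne_zero.mpr (Ne.symm hα)
  ext w
  simp only [Set.mem_setOf_eq]
  constructor
  · rintro ⟨z, hz, hz1, rfl⟩
    have hz1' : z - 1 ≠ 0 := sub_ne_zero.mpr hz1
    rw [← key_line]
    have e1 : (z - α) / (z - 1) - α = z * (1 - α) / (z - 1) := by field_simp; ring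
    have e2 : (z - α) / (z - 1) - 1 = (1 - α) / (z - 1) := by field_simp; ring
    rw [e1, e2, norm_div, norm_div, norm_mul, hz, one_mul]
  · intro h
    have hw1 : w ≠ 1 := by
      intro h1
      subst h1
      simp only [Complex.one_im, Complex.one_re, mul_zero, mul_one] at h
      apply hα
      have ha : α.re = 1 := by nlinarith
      have hb : α.im = 0 := by nlinarith
      exact Complex.ext ha (by simp [hb])
    have hw1' : w - 1 ≠ 0 := sub_ne_zero.mpr hw1
    have habs : ‖w - α‖ = ‖w - 1‖ := (key_line α w).mpr h
    refine ⟨(w - α) / (w - 1), ?_, ?_, ?_⟩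
    · rw [norm_div, habs, div_self]
      exact norm_ne_zero_iff.mpr hw1'
    · intro he
      apply hα
      have h2 : w - α = w - 1 := (div_eq_one_iff_eq hw1').mp he
      linear_combination -h2
    · have hz1 : (w - α) / (w - 1) - 1 ≠ 0 := by
        have e2 : (w - α) / (w - 1) - 1 = (1 - α) / (w - 1) := by field_simp; ring
        rw [e2]
        exact div_ne_zero hα' hw1'
      rw [eq_div_iff hz1]
      field_simp
      ring
end

section
/- Let α ∈ ℂ with α ≠ 1, and write a = Re α, b = Im α. Then {(z − α)/(z − 1) : z ∈ ℂ, |z| < 1} = {x + iy : x, y ∈ ℝ, 2by > (a² + b² − 1) + (2 − 2a)x}, and {(z − α)/(z − 1) : z ∈ ℂ, |z| > 1} = {x + iy : x, y ∈ ℝ, 2by < (a² + b² − 1) + (2 − 2a)x} \ {1}. -/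
open Complex

lemma moebius_invol (α w : ℂ) (hα : α ≠ 1) (hw : w ≠ 1) :
    (((w - α) / (w - 1)) - α) / (((w - α) / (w - 1)) - 1) = w := by
  have h1 : w - 1 ≠ 0 := sub_ne_zero.mpr hw
  have h2 : (1 : ℂ) - α ≠ 0 := sub_ne_zero.mpr (Ne.symm hα)
  have hz1 : ((w - α) / (w - 1)) - 1 = (1 - α) / (w - 1) := by field_simp; try ring
  have hz2 : ((w - α) / (w - 1)) - α = w * (1 - α) / (w - 1) := by field_simp; try ring
  rw [hz1, hz2]
  field_simp

lemma key (α : ℂ) (hα : α ≠ 1) (w : ℂ) :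
    (∃ z : ℂ, ‖z‖ < 1 ∧ w = (z - α) / (z - 1)) ↔
      Complex.normSq (w - α) < Complex.normSq (w - 1) := by
  constructor
  · rintro ⟨z, hz, rfl⟩
    have hz1 : z ≠ 1 := by
      intro h; rw [h] at hz; simp at hz
    have h1 : z - 1 ≠ 0 := sub_ne_zero.mpr hz1
    have h2 : (1 : ℂ) - α ≠ 0 := sub_ne_zero.mpr (Ne.symm hα)
    have e1 : (z - α) / (z - 1) - α = z * (1 - α) / (z - 1) := by field_simp; try ring
    have e2 : (z - α) / (z - 1) - 1 = (1 - α) / (z - 1) := by field_simp; try ring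
    rw [e1, e2, Complex.normSq_div, Complex.normSq_div, Complex.normSq_mul]
    have hp1 : 0 < Complex.normSq (1 - α) := Complex.normSq_pos.mpr h2
    have hp2 : 0 < Complex.normSq (z - 1) := Complex.normSq_pos.mpr h1
    have hzn : Complex.normSq z < 1 := by
      have := Complex.sq_norm z
      nlinarith [norm_nonneg z]
    have : Complex.normSq z * Complex.normSq (1 - α) < Complex.normSq (1 - α) := by
      nlinarith
    gcongr
  · intro h
    have hw : w ≠ 1 := by
      intro hw1; rw [hw1] at h; simp at h
      exact absurd h (not_lt.mpr (Complex.normSq_nonneg _))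
    have h1 : w - 1 ≠ 0 := sub_ne_zero.mpr hw
    refine ⟨(w - α) / (w - 1), ?_, (moebius_invol α w hα hw).symm⟩
    rw [norm_div]
    have hp : 0 < ‖w - 1‖ := by
      simpa using norm_pos_iff.mpr h1
    rw [div_lt_one hp]
    have : Complex.normSq (w - α) < Complex.normSq (w - 1) := h
    have := Complex.sq_norm (w - α)
    have := Complex.sq_norm (w - 1)
    nlinarith [norm_nonneg (w - α), norm_nonneg (w - 1)]

lemma key2 (α : ℂ) (hα : α ≠ 1) (w : ℂ) :
    (∃ z : ℂ, 1 < ‖z‖ ∧ w = (z - α) / (z - 1)) ↔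
      (Complex.normSq (w - 1) < Complex.normSq (w - α) ∧ w ≠ 1) := by
  constructor
  · rintro ⟨z, hz, rfl⟩
    have hz1 : z ≠ 1 := by
      intro h; rw [h] at hz; simp at hz
    have h1 : z - 1 ≠ 0 := sub_ne_zero.mpr hz1
    have h2 : (1 : ℂ) - α ≠ 0 := sub_ne_zero.mpr (Ne.symm hα)
    have e1 : (z - α) / (z - 1) - α = z * (1 - α) / (z - 1) := by field_simp; try ring
    have e2 : (z - α) / (z - 1) - 1 = (1 - α) / (z - 1) := by field_simp; try ring
    constructor
    · rw [e1, e2, Complex.normSq_div, Complex.normSq_div, Complex.normSq_mul]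
      have hp1 : 0 < Complex.normSq (1 - α) := Complex.normSq_pos.mpr h2
      have hp2 : 0 < Complex.normSq (z - 1) := Complex.normSq_pos.mpr h1
      have hzn : 1 < Complex.normSq z := by
        have := Complex.sq_norm z
        nlinarith [norm_nonneg z]
      have : Complex.normSq (1 - α) < Complex.normSq z * Complex.normSq (1 - α) := by
        nlinarith
      gcongr
    · intro hw1
      have : (z - α) / (z - 1) - 1 = 0 := by rw [hw1]; ring
      rw [e2] at this
      exact h2 (by simpa [div_eq_zero_iff, h1] using this)
  · rintro ⟨h, hw⟩
    have h1 : w - 1 ≠ 0 := sub_ne_zero.mpr hw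
    refine ⟨(w - α) / (w - 1), ?_, (moebius_invol α w hα hw).symm⟩
    rw [norm_div]
    have hp : 0 < ‖w - 1‖ := by
      simpa using norm_pos_iff.mpr h1
    rw [lt_div_iff₀ hp, one_mul]
    have := Complex.sq_norm (w - α)
    have := Complex.sq_norm (w - 1)
    nlinarith [norm_nonneg (w - α), norm_nonneg (w - 1)]

lemma normSq_iff (α w : ℂ) :
    Complex.normSq (w - α) < Complex.normSq (w - 1) ↔
      2 * α.im * w.im > (α.re ^ 2 + α.im ^ 2 - 1) + (2 - 2 * α.re) * w.re := by
  simp only [Complex.normSq_apply, Complex.sub_re, Complex.sub_im, Complex.one_re,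
    Complex.one_im]
  constructor <;> intro h <;> nlinarith

/-- For `α ≠ 1`, the Möbius map `z ↦ (z − α)/(z − 1)` sends the open unit disc onto the
open half plane `2by > (a² + b² − 1) + (2 − 2a)x` and the exterior of the closed unit
disc onto the other open half plane with the point `1` removed (`a = Re α`, `b = Im α`). -/
theorem stmt4 (α : ℂ) (hα : α ≠ 1) :
    ({w : ℂ | ∃ z : ℂ, ‖z‖ < 1 ∧ w = (z - α) / (z - 1)} =
      {w : ℂ | 2 * α.im * w.im > (α.re ^ 2 + α.im ^ 2 - 1) + (2 - 2 * α.re) * w.re}) ∧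
    ({w : ℂ | ∃ z : ℂ, 1 < ‖z‖ ∧ w = (z - α) / (z - 1)} =
      {w : ℂ | 2 * α.im * w.im < (α.re ^ 2 + α.im ^ 2 - 1) + (2 - 2 * α.re) * w.re} \ {1}) := by
  constructor
  · ext w
    simp only [Set.mem_setOf_eq]
    rw [key α hα w, normSq_iff]
  · ext w
    simp only [Set.mem_setOf_eq, Set.mem_diff, Set.mem_singleton_iff]
    rw [key2 α hα w]
    constructor
    · rintro ⟨h, hw⟩
      refine ⟨?_, hw⟩
      have := (normSq_iff α w)
      simp only [Complex.normSq_apply, Complex.sub_re, Complex.sub_im, Complex.one_re,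
        Complex.one_im] at h ⊢
      nlinarith
    · rintro ⟨h, hw⟩
      refine ⟨?_, hw⟩
      simp only [Complex.normSq_apply, Complex.sub_re, Complex.sub_im, Complex.one_re,
        Complex.one_im] at h ⊢
      nlinarith
end

section
/- Let k ≥ 2 be an integer and let λ ∈ ℂ with λ ≠ 0. Then there exists z ∈ ℂ with λ(z − 1)^k = 1 and |z| > 1. -/
/-- For `k ≥ 2` and `λ ≠ 0` there is a solution `z` of `λ(z − 1)^k = 1` with `|z| > 1`. -/
theorem stmt8 (k : ℕ) (hk : 2 ≤ k) (l : ℂ) (hl : l ≠ 0) :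
    ∃ z : ℂ, l * (z - 1) ^ k = 1 ∧ 1 < ‖z‖ := by
  have hk0 : k ≠ 0 := by omega
  obtain ⟨w₀, hw₀⟩ : ∃ w : ℂ, w ^ k = l⁻¹ := IsAlgClosed.exists_pow_nat_eq l⁻¹ (by omega)
  have hw₀0 : w₀ ≠ 0 := by
    intro h; rw [h, zero_pow hk0] at hw₀; exact hl (by simpa using hw₀.symm)
  set ζ : ℂ := Complex.exp (2 * Real.pi * Complex.I / k)
  have hζ : IsPrimitiveRoot ζ k := Complex.isPrimitiveRoot_exp k hk0
  have hsum : ∑ j ∈ Finset.range k, ζ ^ j = 0 := hζ.geom_sum_eq_zero (by omega)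
  -- some root has nonnegative real part
  have hex : ∃ j ∈ Finset.range k, 0 ≤ (w₀ * ζ ^ j).re := by
    by_contra h
    push_neg at h
    have hlt : ∑ j ∈ Finset.range k, (w₀ * ζ ^ j).re < 0 :=
      Finset.sum_neg h ⟨0, Finset.mem_range.2 (by omega)⟩
    have : ∑ j ∈ Finset.range k, (w₀ * ζ ^ j).re = 0 := by
      rw [← Complex.re_sum, ← Finset.mul_sum, hsum, mul_zero, Complex.zero_re]
    linarith
  obtain ⟨j, hj, hre⟩ := hex
  set w : ℂ := w₀ * ζ ^ j
  have hwk : w ^ k = l⁻¹ := by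
    rw [mul_pow, ← pow_mul, mul_comm j k, pow_mul, hζ.pow_eq_one, one_pow, mul_one, hw₀]
  have hw0 : w ≠ 0 := mul_ne_zero hw₀0 (pow_ne_zero _ (Complex.exp_ne_zero _))
  refine ⟨1 + w, ?_, ?_⟩
  · rw [add_sub_cancel_left, hwk, mul_inv_cancel₀ hl]
  · have hns : 0 < Complex.normSq w := Complex.normSq_pos.2 hw0
    have h1 : 1 < Complex.normSq (1 + w) := by
      simp only [Complex.normSq_apply, Complex.add_re, Complex.add_im, Complex.one_re,
        Complex.one_im, Complex.normSq_apply] at *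
      nlinarith
    rw [Complex.norm_def]
    exact (Real.lt_sqrt (by positivity)).2 (by simpa using h1)
end

section
/- For every z ∈ ℂ with |z| = 1 and z² ≠ −1 one has z/(z² + 1) = 1/(2·Re z); consequently {z/(z² + 1) : z ∈ ℂ, |z| = 1, z² ≠ −1} = {x ∈ ℝ : |x| ≥ 1/2}, regarded as a subset of ℂ via the embedding of ℝ in ℂ. -/
lemma key_s9 (z : ℂ) (hz : ‖z‖ = 1) : z ^ 2 + 1 = 2 * z.re * z := by
  have h1 : z * (starRingEnd ℂ) z = 1 := by
    rw [Complex.mul_conj, Complex.normSq_eq_norm_sq, hz]; norm_num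
  have := Complex.add_conj z
  calc z ^ 2 + 1 = z * (z + (starRingEnd ℂ) z) := by rw [mul_add, h1]; ring
    _ = 2 * z.re * z := by rw [this]; push_cast; ring

lemma keyre (z : ℂ) (hz : ‖z‖ = 1) (h2 : z ^ 2 ≠ -1) : z.re ≠ 0 := by
  intro h
  apply h2
  have := key_s9 z hz
  rw [h] at this
  push_cast at this
  linear_combination this

lemma keyfun (z : ℂ) (hz : ‖z‖ = 1) (h2 : z ^ 2 ≠ -1) :
    z / (z ^ 2 + 1) = 1 / (2 * (z.re : ℂ)) := by
  have hz0 : z ≠ 0 := by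
    intro h; rw [h] at hz; simp at hz
  have hre : (z.re : ℂ) ≠ 0 := by
    exact_mod_cast keyre z hz h2
  rw [key_s9 z hz]
  field_simp

/-- For `z` on the unit circle with `z² ≠ −1` one has `z/(z² + 1) = 1/(2 Re z)`, and
the image of the unit circle (minus `±i`) under `z ↦ z/(z² + 1)` is
`{x ∈ ℝ : |x| ≥ 1/2}`, viewed inside `ℂ`. -/
theorem stmt9 :
    (∀ z : ℂ, ‖z‖ = 1 → z ^ 2 ≠ -1 →
      z / (z ^ 2 + 1) = 1 / (2 * (z.re : ℂ))) ∧
    {w : ℂ | ∃ z : ℂ, ‖z‖ = 1 ∧ z ^ 2 ≠ -1 ∧ w = z / (z ^ 2 + 1)} =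
      {w : ℂ | ∃ x : ℝ, 1 / 2 ≤ |x| ∧ w = (x : ℂ)} := by
  refine ⟨keyfun, ?_⟩
  ext w
  simp only [Set.mem_setOf_eq]
  constructor
  · rintro ⟨z, hz, h2, rfl⟩
    have hre : z.re ≠ 0 := keyre z hz h2
    refine ⟨1 / (2 * z.re), ?_, ?_⟩
    · rw [abs_div, abs_mul]
      rw [div_le_div_iff₀ (by norm_num) (by positivity)]
      have h1 : |z.re| ≤ 1 := by
        rw [← hz]; exact Complex.abs_re_le_norm z
      simp only [abs_one, abs_two]
      nlinarith [abs_nonneg z.re]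
    · rw [keyfun z hz h2]
      push_cast
      ring
  · rintro ⟨x, hx, rfl⟩
    have hx0 : x ≠ 0 := by
      intro h; rw [h] at hx; simp at hx; linarith
    set r : ℝ := 1 / (2 * x) with hr
    have hr0 : r ≠ 0 := by
      simp [hr, hx0]
    have hrle : r ^ 2 ≤ 1 := by
      have h2x : (1:ℝ) ≤ 2 * |x| := by linarith
      have : |r| ≤ 1 := by
        rw [hr, abs_div, abs_mul, abs_one, abs_two]
        rw [div_le_one (by positivity)]
        linarith
      nlinarith [abs_nonneg r, sq_abs r]
    set z : ℂ := ⟨r, Real.sqrt (1 - r ^ 2)⟩ with hzdef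
    have hzre : z.re = r := rfl
    have hnorm : ‖z‖ = 1 := by
      have : Complex.normSq z = 1 := by
        simp only [hzdef, Complex.normSq_mk]
        rw [Real.mul_self_sqrt (by nlinarith : (0:ℝ) ≤ 1 - r ^ 2)]
        ring
      rw [Complex.norm_def, this, Real.sqrt_one]
    have hz0 : z ≠ 0 := by
      intro h; rw [h] at hnorm; simp at hnorm
    have h2 : z ^ 2 ≠ -1 := by
      intro h
      have hk := key_s9 z hnorm
      rw [h, hzre] at hk
      have : (2 * r : ℂ) * z = 0 := by linear_combination -hk
      rcases mul_eq_zero.mp this with h' | h'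
      · have h'' : (2 * r : ℝ) = 0 := by exact_mod_cast h'
        exact hr0 (by linarith)
      · exact hz0 h'
    refine ⟨z, hnorm, h2, ?_⟩
    rw [keyfun z hnorm h2, hzre, hr]
    push_cast
    field_simp
end

section
/- Let s = Σ_{j=0}^{k} a_j X^j be a polynomial with real coefficients a_0, …, a_k satisfying 2|a_1| > Σ_{j=0}^{k} |a_j|. Then the set E = { s(z)/(z² − 1) : z ∈ ℂ, |z| = 1, z ≠ 1, z ≠ −1 } is nonempty, disjoint from the real axis, and is not a connected subset of ℂ. -/
open Polynomial Finset

/-- If `s = Σ_{j=0}^k a_j X^j` has real coefficients with `2|a_1| > Σ_{j=0}^k |a_j|`,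
then the set `E = {s(z)/(z² − 1) : |z| = 1, z ≠ ±1}` is nonempty, disjoint from the
real axis, and not connected. -/
theorem stmt12 (k : ℕ) (hk : 1 ≤ k) (a : ℕ → ℝ)
    (s : Polynomial ℂ)
    (hs : s = ∑ j ∈ Finset.range (k + 1), Polynomial.C ((a j : ℂ)) * Polynomial.X ^ j)
    (h : 2 * |a 1| > ∑ j ∈ Finset.range (k + 1), |a j|)
    (E : Set ℂ)
    (hE : E = {w : ℂ | ∃ z : ℂ, ‖z‖ = 1 ∧ z ≠ 1 ∧ z ≠ -1 ∧
      w = s.eval z / (z ^ 2 - 1)}) :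
    E.Nonempty ∧ (∀ w ∈ E, w.im ≠ 0) ∧ ¬ IsConnected E := by
  have ha1 : a 1 ≠ 0 := by
    intro h0
    have h1mem : (1:ℕ) ∈ Finset.range (k+1) := Finset.mem_range.2 (by omega)
    have hT : |a 1| ≤ ∑ j ∈ Finset.range (k + 1), |a j| :=
      Finset.single_le_sum (fun j _ => abs_nonneg (a j)) h1mem
    rw [h0] at h hT
    simp at h hT
    linarith
  have key : ∀ z : ℂ, ‖z‖ = 1 → z ≠ 1 → z ≠ -1 →
      z.im ≠ 0 ∧ 0 < Complex.normSq (z ^ 2 - 1) ∧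
      0 < ((starRingEnd ℂ) z * s.eval z).re * a 1 ∧
      (s.eval z / (z ^ 2 - 1)).im
        = -2 * z.im * ((starRingEnd ℂ) z * s.eval z).re / Complex.normSq (z ^ 2 - 1) := by
    intro z hz h1 hm1
    have hnsq : Complex.normSq z = 1 := by rw [Complex.normSq_eq_norm_sq, hz]; norm_num
    have hz2 : z.re ^ 2 + z.im ^ 2 = 1 := by
      have := Complex.normSq_apply z
      nlinarith [this, hnsq]
    have hzim : z.im ≠ 0 := by
      intro hc
      have hre : z.re = 1 ∨ z.re = -1 := by
        have hmul : (z.re - 1) * (z.re + 1) = 0 := by nlinarith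
        rcases mul_eq_zero.1 hmul with h' | h'
        · left; linarith
        · right; linarith
      rcases hre with h' | h'
      · exact h1 (Complex.ext (by simp [h']) (by simp [hc]))
      · exact hm1 (Complex.ext (by simp [h']) (by simp [hc]))
    have hd : z ^ 2 - 1 ≠ 0 := by
      intro hc
      have hmul : (z - 1) * (z + 1) = 0 := by linear_combination hc
      rcases mul_eq_zero.1 hmul with h' | h'
      · exact h1 (by linear_combination h')
      · exact hm1 (by linear_combination h')
    have hr : 0 < Complex.normSq (z ^ 2 - 1) := Complex.normSq_pos.2 hd
    have him : (s.eval z / (z ^ 2 - 1)).im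
        = -2 * z.im * ((starRingEnd ℂ) z * s.eval z).re / Complex.normSq (z ^ 2 - 1) := by
      rw [Complex.div_im, div_sub_div_same]
      congr 1
      have e1 : (z ^ 2 - 1).re = z.re * z.re - z.im * z.im - 1 := by
        simp [pow_two, Complex.mul_re]
      have e2 : (z ^ 2 - 1).im = z.re * z.im + z.im * z.re := by
        simp [pow_two, Complex.mul_im]
      have e3 : ((starRingEnd ℂ) z * s.eval z).re
          = z.re * (s.eval z).re + z.im * (s.eval z).im := by
        simp [Complex.mul_re]
      rw [e1, e2, e3]
      linear_combination (s.eval z).im * hz2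
    have hzc : z * (starRingEnd ℂ) z = 1 := by
      rw [Complex.mul_conj, hnsq]; norm_num
    have hsev : s.eval z = ∑ j ∈ Finset.range (k+1), (a j : ℂ) * z ^ j := by
      rw [hs, Polynomial.eval_finset_sum]; simp
    have hP : ((starRingEnd ℂ) z * s.eval z).re
        = ∑ j ∈ Finset.range (k+1), a j * ((starRingEnd ℂ) z * z ^ j).re := by
      rw [hsev, Finset.mul_sum, Complex.re_sum]
      refine Finset.sum_congr rfl fun j _ => ?_
      have e : (starRingEnd ℂ) z * ((a j : ℂ) * z ^ j)
          = (a j : ℂ) * ((starRingEnd ℂ) z * z ^ j) := by ring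
      rw [e]
      simp [Complex.mul_re]
    have hf1 : ((starRingEnd ℂ) z * z ^ 1).re = 1 := by
      rw [pow_one, mul_comm, hzc]; simp
    have hfle : ∀ j : ℕ, |((starRingEnd ℂ) z * z ^ j).re| ≤ 1 := by
      intro j
      calc |((starRingEnd ℂ) z * z ^ j).re| ≤ ‖(starRingEnd ℂ) z * z ^ j‖ :=
            Complex.abs_re_le_norm _
        _ = 1 := by rw [norm_mul, norm_pow, Complex.norm_conj, hz]; simp
    have h1mem : (1:ℕ) ∈ Finset.range (k+1) := Finset.mem_range.2 (by omega)
    have hsplit : ((starRingEnd ℂ) z * s.eval z).re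
        = a 1 + ∑ j ∈ (Finset.range (k+1)).erase 1, a j * ((starRingEnd ℂ) z * z ^ j).re := by
      rw [hP, ← Finset.add_sum_erase _ _ h1mem, hf1, mul_one]
    have hTsplit : ∑ j ∈ (Finset.range (k+1)).erase 1, |a j|
        = (∑ j ∈ Finset.range (k+1), |a j|) - |a 1| := by
      rw [← Finset.add_sum_erase _ (fun j => |a j|) h1mem]; ring
    have hbound : |∑ j ∈ (Finset.range (k+1)).erase 1, a j * ((starRingEnd ℂ) z * z ^ j).re|
        < |a 1| := by
      calc |∑ j ∈ (Finset.range (k+1)).erase 1, a j * ((starRingEnd ℂ) z * z ^ j).re|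
          ≤ ∑ j ∈ (Finset.range (k+1)).erase 1, |a j * ((starRingEnd ℂ) z * z ^ j).re| :=
            Finset.abs_sum_le_sum_abs _ _
        _ ≤ ∑ j ∈ (Finset.range (k+1)).erase 1, |a j| := by
            refine Finset.sum_le_sum fun j _ => ?_
            rw [abs_mul]
            nlinarith [hfle j, abs_nonneg (a j), abs_nonneg (((starRingEnd ℂ) z * z ^ j).re)]
        _ = (∑ j ∈ Finset.range (k+1), |a j|) - |a 1| := hTsplit
        _ < |a 1| := by linarith
    have hsign : 0 < ((starRingEnd ℂ) z * s.eval z).re * a 1 := by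
      rcases abs_lt.1 hbound with ⟨hl, hr'⟩
      rw [hsplit]
      rcases lt_or_gt_of_ne ha1 with hn | hp
      · rw [abs_of_neg hn] at hl hr'; nlinarith
      · rw [abs_of_pos hp] at hl hr'; nlinarith
    exact ⟨hzim, hr, hsign, him⟩
  -- specific points
  have hI : ‖Complex.I‖ = 1 := Complex.norm_I
  have hI1 : Complex.I ≠ 1 := by
    intro h'; have := congrArg Complex.im h'; simp at this
  have hIm1 : Complex.I ≠ -1 := by
    intro h'; have := congrArg Complex.im h'; simp at this
  have hnI : ‖-Complex.I‖ = 1 := by simp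
  have hnI1 : (-Complex.I) ≠ 1 := by
    intro h'; have := congrArg Complex.im h'; simp at this
  have hnIm1 : (-Complex.I) ≠ -1 := by
    intro h'; have := congrArg Complex.im h'; simp at this
  have hw₁E : s.eval Complex.I / (Complex.I ^ 2 - 1) ∈ E := by
    rw [hE]; exact ⟨Complex.I, hI, hI1, hIm1, rfl⟩
  have hw₂E : s.eval (-Complex.I) / ((-Complex.I) ^ 2 - 1) ∈ E := by
    rw [hE]; exact ⟨-Complex.I, hnI, hnI1, hnIm1, rfl⟩
  obtain ⟨-, hr1, hs1, hf1⟩ := key Complex.I hI hI1 hIm1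
  obtain ⟨-, hr2, hs2, hf2⟩ := key (-Complex.I) hnI hnI1 hnIm1
  have him1 : (s.eval Complex.I / (Complex.I ^ 2 - 1)).im * a 1 < 0 := by
    rw [hf1, Complex.I_im, div_mul_eq_mul_div]
    apply div_neg_of_neg_of_pos _ hr1
    nlinarith [hs1]
  have him2 : 0 < (s.eval (-Complex.I) / ((-Complex.I) ^ 2 - 1)).im * a 1 := by
    rw [hf2, Complex.neg_im, Complex.I_im, div_mul_eq_mul_div]
    apply div_pos _ hr2
    nlinarith [hs2]
  have himne : ∀ w ∈ E, w.im ≠ 0 := by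
    intro w hw
    rw [hE] at hw
    obtain ⟨z, hz, h1, hm1, rfl⟩ := hw
    obtain ⟨hzim, hrz, hsig, hform⟩ := key z hz h1 hm1
    rw [hform]
    have hPne : ((starRingEnd ℂ) z * s.eval z).re ≠ 0 := by
      intro h0; rw [h0] at hsig; simp at hsig
    exact div_ne_zero (mul_ne_zero (mul_ne_zero (by norm_num) hzim) hPne) (ne_of_gt hrz)
  refine ⟨⟨_, hw₁E⟩, himne, ?_⟩
  rintro ⟨hne, hconn⟩
  have hu : IsOpen {w : ℂ | 0 < w.im} := isOpen_lt continuous_const Complex.continuous_im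
  have hv : IsOpen {w : ℂ | w.im < 0} := isOpen_lt Complex.continuous_im continuous_const
  have hsub : E ⊆ {w : ℂ | 0 < w.im} ∪ {w : ℂ | w.im < 0} := by
    intro w hw
    rcases lt_trichotomy w.im 0 with h' | h' | h'
    · exact Or.inr h'
    · exact absurd h' (himne w hw)
    · exact Or.inl h'
  have hcases : (0 < (s.eval Complex.I / (Complex.I ^ 2 - 1)).im ∧
        (s.eval (-Complex.I) / ((-Complex.I) ^ 2 - 1)).im < 0) ∨
      (0 < (s.eval (-Complex.I) / ((-Complex.I) ^ 2 - 1)).im ∧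
        (s.eval Complex.I / (Complex.I ^ 2 - 1)).im < 0) := by
    rcases lt_or_gt_of_ne ha1 with hn | hp
    · left; constructor <;> nlinarith
    · right; constructor <;> nlinarith
  have hEu : (E ∩ {w : ℂ | 0 < w.im}).Nonempty := by
    rcases hcases with ⟨h1', h2'⟩ | ⟨h1', h2'⟩
    · exact ⟨_, hw₁E, h1'⟩
    · exact ⟨_, hw₂E, h1'⟩
  have hEv : (E ∩ {w : ℂ | w.im < 0}).Nonempty := by
    rcases hcases with ⟨h1', h2'⟩ | ⟨h1', h2'⟩
    · exact ⟨_, hw₂E, h2'⟩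
    · exact ⟨_, hw₁E, h2'⟩
  obtain ⟨w, hwE, hw1, hw2⟩ := hconn _ _ hu hv hsub hEu hEv
  simp only [Set.mem_setOf_eq] at hw1 hw2
  linarith
end

section
/- Let α ∈ ℂ with α ≠ −1 and |α|² + Re α = 0. Then |α| < 1 and {(z + α)/(z − 1)² : z ∈ ℂ, |z| = 1, z ≠ 1} = { −(α + 1)·r − (α + 1)(1 + 2·conj(α)) / (4(1 − |α|²)) : r ∈ ℝ, r ≥ 0 }. -/
lemma core15 (α : ℂ) (hab : α.re^2 + α.im^2 + α.re = 0) (ha : α.re + 1 ≠ 0) (s : ℝ) :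
    (1 + α) * ((-1/2 : ℂ) + s*Complex.I)^2 + ((-1/2:ℂ) + s*Complex.I)
    = -(α+1) * (((s + (-α.im/(α.re+1))/2)^2 : ℝ) : ℂ)
      - (α+1) * (1 + 2*(starRingEnd ℂ) α) / (4*(1 - ((‖α‖ : ℝ):ℂ)^2)) := by
  set a := α.re with h_a
  set b := α.im with h_b
  have hα : α = (a:ℂ) + (b:ℂ)*Complex.I := (Complex.re_add_im α).symm
  have habs : ((‖α‖ : ℝ):ℂ)^2 = ((a:ℝ)^2 + b^2 : ℝ) := by
    rw [← Complex.ofReal_pow, Complex.sq_norm, Complex.normSq_apply]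
    push_cast; ring
  have hconj : (starRingEnd ℂ) α = (a:ℂ) - (b:ℂ)*Complex.I := by
    rw [hα]; simp [Complex.conj_ofReal]; ring
  have ha' : ((a:ℂ) + 1) ≠ 0 := by exact_mod_cast Complex.ofReal_ne_zero.mpr ha
  have habC : (a:ℂ)^2 + (b:ℂ)^2 + a = 0 := by exact_mod_cast congrArg (Complex.ofReal) hab
  rw [habs, hconj]; rw [hα]
  push_cast
  rw [show (1:ℂ) - ((a:ℂ)^2+(b:ℂ)^2) = (a:ℂ)+1 by linear_combination -habC]
  field_simp
  linear_combination ((12)*(a:ℂ) + (-16)*(a:ℂ)*(s:ℂ)*Complex.I + (-16)*(s:ℂ)*Complex.I + (4)*(b:ℂ)*Complex.I + (12)) * habC + ((-16)*(a:ℂ)^2*(b:ℂ)*(s:ℂ) + (-32)*(a:ℂ)*(b:ℂ)*(s:ℂ) + (-16)*(b:ℂ)*(s:ℂ) + (48)*(a:ℂ)^2*(s:ℂ)^2 + (48)*(a:ℂ)*(s:ℂ)^2 + (16)*(s:ℂ)^2 + (16)*(a:ℂ)^3*(s:ℂ)^2 + (16)*(a:ℂ)^2*(b:ℂ)*(s:ℂ)^2*Complex.I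 + (32)*(a:ℂ)*(b:ℂ)*(s:ℂ)^2*Complex.I + (16)*(b:ℂ)*(s:ℂ)^2*Complex.I + (-8)*(a:ℂ)*(b:ℂ)^2 + (-8)*(b:ℂ)^2) * Complex.I_sq

/-- For `α ≠ −1` with `|α|² + Re α = 0`, one has `|α| < 1` and the curve
`{(z + α)/(z − 1)² : |z| = 1, z ≠ 1}` is the half line
`{−(α + 1)r − (α + 1)(1 + 2 conj α)/(4(1 − |α|²)) : r ≥ 0}`. -/
theorem stmt15 (α : ℂ) (hα : α ≠ -1) (h : ‖α‖ ^ 2 + α.re = 0) :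
    ‖α‖ < 1 ∧
    {w : ℂ | ∃ z : ℂ, ‖z‖ = 1 ∧ z ≠ 1 ∧ w = (z + α) / (z - 1) ^ 2} =
      {w : ℂ | ∃ r : ℝ, 0 ≤ r ∧
        w = -(α + 1) * (r : ℂ)
            - (α + 1) * (1 + 2 * (starRingEnd ℂ) α)
              / (4 * (1 - (‖α‖ : ℂ) ^ 2))} := by
  have hsq : ‖α‖ ^ 2 = α.re^2 + α.im^2 := by
    rw [Complex.sq_norm, Complex.normSq_apply]; ring
  have hab : α.re^2 + α.im^2 + α.re = 0 := by rw [← hsq]; exact h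
  have ha1 : 0 < α.re + 1 := by
    rcases lt_trichotomy (α.re + 1) 0 with h1 | h1 | h1
    · nlinarith [sq_nonneg α.im]
    · exfalso; apply hα
      have him : α.im = 0 := by nlinarith [sq_nonneg α.im]
      have hre : α.re = -1 := by linarith
      apply Complex.ext <;> simp [him, hre]
    · exact h1
  have habs1 : ‖α‖ < 1 := by
    nlinarith [norm_nonneg α]
  refine ⟨habs1, ?_⟩
  ext w
  simp only [Set.mem_setOf_eq]
  constructor
  · rintro ⟨z, hz1, hz2, hw⟩
    have hz : z - 1 ≠ 0 := sub_ne_zero.mpr hz2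
    have hnz : z.re^2 + z.im^2 = 1 := by
      have : ‖z‖ ^ 2 = 1 := by rw [hz1]; norm_num
      rw [Complex.sq_norm, Complex.normSq_apply] at this; nlinarith
    have hzre : z.re ≠ 1 := by
      intro hre
      apply hz2
      have him : z.im = 0 := by nlinarith
      apply Complex.ext <;> simp [hre, him]
    set u := (z - 1)⁻¹ with hudef
    have hure : u.re = -1/2 := by
      rw [hudef, Complex.inv_re, Complex.normSq_apply]
      simp only [Complex.sub_re, Complex.sub_im, Complex.one_re, Complex.one_im, sub_zero]
      have hd : (z.re - 1) * (z.re - 1) + z.im * z.im ≠ 0 := by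
        intro hc
        apply hzre
        nlinarith [sq_nonneg (z.re - 1), sq_nonneg z.im]
      field_simp
      nlinarith
    set s := u.im with hsdef
    have hu : u = (-1/2 : ℂ) + (s:ℝ)*Complex.I := by
      apply Complex.ext
      · simpa using hure
      · simp [hsdef]
    have hw2 : w = (1 + α) * u^2 + u := by
      rw [hw, hudef]
      field_simp
      ring
    refine ⟨(s + (-α.im/(α.re+1))/2)^2, sq_nonneg _, ?_⟩
    rw [hw2, hu]
    exact core15 α hab (ne_of_gt ha1) s
  · rintro ⟨r, hr, hw⟩
    set s := Real.sqrt r - (-α.im/(α.re+1))/2 with hsdef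
    have hs : (s + (-α.im/(α.re+1))/2)^2 = r := by
      rw [hsdef]; ring_nf; rw [Real.sq_sqrt hr]
    set u : ℂ := (-1/2 : ℂ) + (s:ℝ)*Complex.I with hudef
    have hure : u.re = -1/2 := by simp [hudef]
    have hu0 : u ≠ 0 := by
      intro h0
      rw [h0] at hure
      norm_num at hure
    refine ⟨1 + u⁻¹, ?_, ?_, ?_⟩
    · have h1 : (1 : ℂ) + u⁻¹ = (u + 1)/u := by field_simp
      rw [h1, Complex.norm_div]
      have habseq : ‖u + 1‖ = ‖u‖ := by
        rw [Complex.norm_def, Complex.norm_def]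
        congr 1
        rw [Complex.normSq_apply, Complex.normSq_apply]
        simp [hudef]
        ring
      rw [habseq, div_self (norm_ne_zero_iff.mpr hu0)]
    · intro hc
      have : u⁻¹ = 0 := by linear_combination hc
      exact hu0 (inv_eq_zero.mp this)
    · have heq : (1 + u⁻¹ + α) / (1 + u⁻¹ - 1)^2 = (1 + α) * u^2 + u := by
        rw [show (1:ℂ) + u⁻¹ - 1 = u⁻¹ by ring]
        field_simp
        ring
      rw [heq, hudef, core15 α hab (ne_of_gt ha1) s, hs, hw]
end

section
/- Let α ∈ ℂ with α ≠ 0. Then there exist t, s ∈ ℝ with (it − 1/2)²(α + 1) + (it − 1/2) = α/2 + s·i·α if and only if |α|² + Re α = 0. Moreover, if |α|² + Re α = 0, then for every t ∈ ℝ there exists s ∈ ℝ satisfying this equation. -/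
/-- For `α ≠ 0`: the parabola `(it − 1/2)²(α + 1) + (it − 1/2)` meets the line
`α/2 + siα` iff `|α|² + Re α = 0`; and in that case every point of the parabola lies
on the line. -/
theorem stmt16 (α : ℂ) (hα : α ≠ 0) :
    ((∃ t s : ℝ, (Complex.I * t - 1 / 2) ^ 2 * (α + 1) + (Complex.I * t - 1 / 2) =
        α / 2 + s * Complex.I * α) ↔ ‖α‖ ^ 2 + α.re = 0) ∧
    (‖α‖ ^ 2 + α.re = 0 → ∀ t : ℝ, ∃ s : ℝ,
      (Complex.I * t - 1 / 2) ^ 2 * (α + 1) + (Complex.I * t - 1 / 2) =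
        α / 2 + s * Complex.I * α) := by
  set a := α.re with ha
  set b := α.im with hb
  have habs : ‖α‖ ^ 2 = a * a + b * b := by
    rw [Complex.sq_norm, Complex.normSq_apply]
  have key : ‖α‖ ^ 2 + α.re = 0 → ∀ t : ℝ, ∃ s : ℝ,
      (Complex.I * t - 1 / 2) ^ 2 * (α + 1) + (Complex.I * t - 1 / 2) =
        α / 2 + s * Complex.I * α := by
    intro hcond t
    rw [habs] at hcond
    by_cases hb0 : b = 0
    · -- then a = -1
      have ha1 : a = -1 := by
        have hane : a ≠ 0 := by
          intro h0
          apply hα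
          apply Complex.ext <;> simp [← ha, ← hb, h0, hb0]
        have : a * (a + 1) = 0 := by nlinarith
        rcases mul_eq_zero.mp this with h | h
        · exact absurd h hane
        · linarith
      refine ⟨-t, ?_⟩
      simp only [Complex.ext_iff, pow_two]
      constructor <;>
        simp [Complex.ext_iff, ← ha, ← hb, ha1, hb0] <;> ring
    · refine ⟨(t ^ 2 + 1 / 4) * (a + 1) / b - t, ?_⟩
      simp only [Complex.ext_iff]
      constructor <;>
        · simp [Complex.ext_iff, pow_two, ← ha, ← hb]
          field_simp
          nlinarith [hcond, sq_nonneg t]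
  refine ⟨⟨?_, fun h => by obtain ⟨s, hs⟩ := key h 0; exact ⟨0, s, hs⟩⟩, key⟩
  rintro ⟨t, s, h⟩
  simp [Complex.ext_iff, pow_two, ← ha, ← hb] at h
  rw [habs]
  have hc : (t ^ 2 + 1 / 4) * (a * a + b * b + a) = 0 := by
    linear_combination (-a) * h.1 + (-b) * h.2
  have : (0:ℝ) < t ^ 2 + 1 / 4 := by positivity
  have := mul_eq_zero.mp hc
  rcases this with h0 | h0
  · linarith
  · linarith
end
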